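/- (Smoothness-type deviation inequality.) Consider a declared welfare maximizer mechanism on a bid space 𝓑, and let v_i be a valuation of agent i such that the valuation (1/2)·v_i belongs to 𝓑. Then for every profile b_{-i} ∈ 𝓑^{n−1} of bids of the other agents and every subset S ⊆ Fin m, the utility of agent i when deviating to the half-truthful bid satisfies u_i(v_i; (1/2)·v_i, b_{-i}) ≥ (1/2)·v_i(S) − ( W^{b_{-i}}(Fin m) − W^{b_{-i}}(Fin m \ S) ). -/
import Mathlib


open Finset

/-- A valuation on `m` items: normalized at `∅`, monotone, nonnegative. -/
def IsValuation {m : ℕ} (v : Finset (Fin m) → ℝ) : Prop :=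
  v ∅ = 0 ∧ (∀ S T : Finset (Fin m), S ⊆ T → v S ≤ v T) ∧ (∀ S, 0 ≤ v S)

/-- `S` is in the demand set of valuation `v` at prices `p`. -/
def InDemand {m : ℕ} (v : Finset (Fin m) → ℝ) (p : Fin m → ℝ) (S : Finset (Fin m)) : Prop :=
  ∀ T : Finset (Fin m), v T - ∑ j ∈ T, p j ≤ v S - ∑ j ∈ S, p j

/-- Gross substitutes valuations. -/
def IsGS {m : ℕ} (v : Finset (Fin m) → ℝ) : Prop :=
  IsValuation v ∧
    ∀ p q : Fin m → ℝ, (∀ j, p j ≤ q j) →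
      ∀ S : Finset (Fin m), InDemand v p S →
        ∃ T : Finset (Fin m), InDemand v q T ∧ ∀ j ∈ S, p j = q j → j ∈ T

/-- Additive valuations. -/
def IsAdditive {m : ℕ} (v : Finset (Fin m) → ℝ) : Prop :=
  ∃ w : Fin m → ℝ, (∀ j, 0 ≤ w j) ∧ ∀ S : Finset (Fin m), v S = ∑ j ∈ S, w j

/-- XOS valuations: a max over a nonempty finite family of nonnegative additive valuations. -/
def IsXOS {m : ℕ} (v : Finset (Fin m) → ℝ) : Prop :=
  ∃ (k : ℕ) (w : Fin (k + 1) → Fin m → ℝ),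
    (∀ i j, 0 ≤ w i j) ∧
    ∀ S : Finset (Fin m),
      v S = Finset.univ.sup' Finset.univ_nonempty (fun i => ∑ j ∈ S, w i j)

def GSvals (m : ℕ) : Set (Finset (Fin m) → ℝ) := {u | IsGS u}
def XOSvals (m : ℕ) : Set (Finset (Fin m) → ℝ) := {u | IsXOS u}

/-- The welfare `W^b(S)`: the maximum of `∑ i, b i (X i)` over allocations (pairwise disjoint
tuples of subsets) contained in `S`. -/
noncomputable def W {n m : ℕ} (b : Fin n → Finset (Fin m) → ℝ) (S : Finset (Fin m)) : ℝ :=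
  sSup {t : ℝ | ∃ X : Fin n → Finset (Fin m),
    (∀ i j : Fin n, i ≠ j → Disjoint (X i) (X j)) ∧ (∀ i, X i ⊆ S) ∧ t = ∑ i, b i (X i)}

/-- The welfare `W^{b₋ᵢ}(S)` with agent `i` omitted. -/
noncomputable def Wminus {n m : ℕ} (b : Fin n → Finset (Fin m) → ℝ) (i : Fin n)
    (S : Finset (Fin m)) : ℝ :=
  sSup {t : ℝ | ∃ X : Fin n → Finset (Fin m),
    (∀ k l : Fin n, k ≠ l → Disjoint (X k) (X l)) ∧ (∀ k, X k ⊆ S) ∧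
    t = ∑ k ∈ Finset.univ.erase i, b k (X k)}

/-- The welfare `W^b(x)` for a multiplicity vector `x : Fin m → ℕ`: maximum of `∑ i, b i (X i)`
over tuples of sets in which each item `j` is used at most `x j` times. -/
noncomputable def Wmult {n m : ℕ} (b : Fin n → Finset (Fin m) → ℝ) (x : Fin m → ℕ) : ℝ :=
  sSup {t : ℝ | ∃ X : Fin n → Finset (Fin m),
    (∀ j : Fin m, (Finset.univ.filter fun i => j ∈ X i).card ≤ x j) ∧ t = ∑ i, b i (X i)}

/-- The optimal welfare for the true valuations. -/
noncomputable def OPT {n m : ℕ} (v : Fin n → Finset (Fin m) → ℝ) : ℝ := W v Finset.univ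

/-- A mechanism: allocation and payment maps on bid profiles. -/
structure Mechanism (n m : ℕ) where
  alloc : (Fin n → Finset (Fin m) → ℝ) → Fin n → Finset (Fin m)
  pay : (Fin n → Finset (Fin m) → ℝ) → Fin n → ℝ

/-- A bid profile lies in the bid space `B`. -/
def InBidSpace {n m : ℕ} (B : Set (Finset (Fin m) → ℝ))
    (b : Fin n → Finset (Fin m) → ℝ) : Prop :=
  ∀ i, b i ∈ B

/-- On bid profiles from `B`, the allocation is pairwise disjoint. -/
def AllocDisjoint {n m : ℕ} (M : Mechanism n m) (B : Set (Finset (Fin m) → ℝ)) : Prop :=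
  ∀ b, InBidSpace B b → ∀ i j : Fin n, i ≠ j → Disjoint (M.alloc b i) (M.alloc b j)

/-- On bid profiles from `B`, payments are nonnegative. -/
def PayNonneg {n m : ℕ} (M : Mechanism n m) (B : Set (Finset (Fin m) → ℝ)) : Prop :=
  ∀ b, InBidSpace B b → ∀ i, 0 ≤ M.pay b i

/-- The utility of agent `i` with true valuation `v` under bid profile `b`. -/
noncomputable def util {n m : ℕ} (M : Mechanism n m) (v : Finset (Fin m) → ℝ) (i : Fin n)
    (b : Fin n → Finset (Fin m) → ℝ) : ℝ :=
  v (M.alloc b i) - M.pay b i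

/-- Declared welfare maximizer. -/
def IsDWM {n m : ℕ} (M : Mechanism n m) (B : Set (Finset (Fin m) → ℝ)) : Prop :=
  (∀ b, InBidSpace B b → ∑ i, b i (M.alloc b i) = W b Finset.univ) ∧
  (∀ b, InBidSpace B b → ∀ i, M.pay b i ≤ b i (M.alloc b i)) ∧
  (∀ b, InBidSpace B b → ∀ i : Fin n, ∃ b' : Fin n → Finset (Fin m) → ℝ,
    InBidSpace B b' ∧ b' i = b i ∧ M.alloc b' i = M.alloc b i ∧
    M.pay b' i = b i (M.alloc b i))

/-- English Walrasian mechanism: welfare-maximizing allocation w.r.t. the bids, with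
payments given by the minimum Walrasian prices `W^b(𝟙 + e_j) − W^b(𝟙)`. -/
def IsEnglish {n m : ℕ} (M : Mechanism n m) (B : Set (Finset (Fin m) → ℝ)) : Prop :=
  (∀ b, InBidSpace B b → ∑ i, b i (M.alloc b i) = W b Finset.univ) ∧
  (∀ b, InBidSpace B b → ∀ i, M.pay b i =
    ∑ j ∈ M.alloc b i,
      (Wmult b (fun k => if k = j then 2 else 1) - Wmult b (fun _ => 1)))

/-- VCG mechanism: welfare-maximizing allocation w.r.t. the bids, with externality payments. -/
def IsVCG {n m : ℕ} (M : Mechanism n m) (B : Set (Finset (Fin m) → ℝ)) : Prop :=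
  (∀ b, InBidSpace B b → ∑ i, b i (M.alloc b i) = W b Finset.univ) ∧
  (∀ b, InBidSpace B b → ∀ i, M.pay b i =
    Wminus b i Finset.univ - Wminus b i (Finset.univ \ M.alloc b i))

/-- Bid `bi` of agent `i` with true valuation `v` has exposure factor `γ`. -/
def HasExposureFactor {n m : ℕ} (M : Mechanism n m) (B : Set (Finset (Fin m) → ℝ))
    (v : Finset (Fin m) → ℝ) (i : Fin n) (bi : Finset (Fin m) → ℝ) (γ : ℝ) : Prop :=
  ∀ b : Fin n → Finset (Fin m) → ℝ, InBidSpace B b → b i = bi →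
    M.pay b i ≤ (1 + γ) * v (M.alloc b i)

/-- `b` is a pure Nash equilibrium for true valuations `v`. -/
noncomputable def IsNash {n m : ℕ} (M : Mechanism n m) (B : Set (Finset (Fin m) → ℝ))
    (v b : Fin n → Finset (Fin m) → ℝ) : Prop :=
  InBidSpace B b ∧
  ∀ i : Fin n, ∀ bi' ∈ B, util M (v i) i (Function.update b i bi') ≤ util M (v i) i b

/-- A finitely supported probability distribution. -/
structure FinDist (α : Type*) where
  supp : Finset α
  μ : α → ℝ
  nonneg : ∀ a, 0 ≤ μ a
  sum_one : ∑ a ∈ supp, μ a = 1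

/-- Expectation of `f` under a finitely supported distribution. -/
noncomputable def FinDist.exp {α : Type*} (D : FinDist α) (f : α → ℝ) : ℝ :=
  ∑ a ∈ D.supp, D.μ a * f a

/-- Bayes-Nash equilibrium: strategies map types in `V` to bids in `B`, and no unilateral
deviation (depending only on the agent's own type) improves expected utility. -/
noncomputable def IsBNE {n m : ℕ} (M : Mechanism n m) (V B : Set (Finset (Fin m) → ℝ))
    (D : FinDist (Fin n → Finset (Fin m) → ℝ))
    (s : Fin n → (Finset (Fin m) → ℝ) → Finset (Fin m) → ℝ) : Prop :=
  (∀ i : Fin n, ∀ vi ∈ V, s i vi ∈ B) ∧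
  ∀ i : Fin n, ∀ s' : (Finset (Fin m) → ℝ) → Finset (Fin m) → ℝ, (∀ vi ∈ V, s' vi ∈ B) →
    D.exp (fun v => util M (v i) i (Function.update (fun k => s k (v k)) i (s' (v i)))) ≤
    D.exp (fun v => util M (v i) i (fun k => s k (v k)))

/-- Strategy `si` of agent `i` has exposure factor `γ` under distribution `D`. -/
noncomputable def BayesExposure {n m : ℕ} (M : Mechanism n m)
    (V B : Set (Finset (Fin m) → ℝ)) (D : FinDist (Fin n → Finset (Fin m) → ℝ)) (i : Fin n)
    (si : (Finset (Fin m) → ℝ) → Finset (Fin m) → ℝ) (γ : ℝ) : Prop :=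
  ∀ c : (Finset (Fin m) → ℝ) → Fin n → Finset (Fin m) → ℝ,
    (∀ vi ∈ V, InBidSpace B (c vi) ∧ c vi i = si vi) →
    D.exp (fun v => M.pay (c (v i)) i) ≤
      (1 + γ) * D.exp (fun v => (v i) (M.alloc (c (v i)) i))

private lemma set_aux_finite {n m : ℕ} (f : (Fin n → Finset (Fin m)) → ℝ)
    (P Q : (Fin n → Finset (Fin m)) → Prop) :
    {t : ℝ | ∃ X, P X ∧ Q X ∧ t = f X}.Finite :=
  Set.Finite.subset (Set.finite_range f) (by rintro t ⟨X, _, _, rfl⟩; exact ⟨X, rfl⟩)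

private lemma Wminus_set_finite {n m : ℕ} (b : Fin n → Finset (Fin m) → ℝ) (i : Fin n)
    (S : Finset (Fin m)) :
    {t : ℝ | ∃ X : Fin n → Finset (Fin m),
      (∀ k l : Fin n, k ≠ l → Disjoint (X k) (X l)) ∧ (∀ k, X k ⊆ S) ∧
      t = ∑ k ∈ Finset.univ.erase i, b k (X k)}.Finite :=
  set_aux_finite _ _ _

private lemma Wminus_set_nonempty {n m : ℕ} (b : Fin n → Finset (Fin m) → ℝ) (i : Fin n)
    (S : Finset (Fin m)) :
    {t : ℝ | ∃ X : Fin n → Finset (Fin m),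
      (∀ k l : Fin n, k ≠ l → Disjoint (X k) (X l)) ∧ (∀ k, X k ⊆ S) ∧
      t = ∑ k ∈ Finset.univ.erase i, b k (X k)}.Nonempty :=
  ⟨_, fun _ => ∅, fun _ _ _ => Finset.disjoint_empty_left _, fun _ => Finset.empty_subset _, rfl⟩

private lemma le_Wminus {n m : ℕ} (b : Fin n → Finset (Fin m) → ℝ) (i : Fin n)
    (S : Finset (Fin m)) (X : Fin n → Finset (Fin m))
    (hd : ∀ k l : Fin n, k ≠ l → Disjoint (X k) (X l)) (hs : ∀ k, X k ⊆ S) :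
    ∑ k ∈ Finset.univ.erase i, b k (X k) ≤ Wminus b i S :=
  le_csSup (Wminus_set_finite b i S).bddAbove ⟨X, hd, hs, rfl⟩

private lemma Wminus_attained {n m : ℕ} (b : Fin n → Finset (Fin m) → ℝ) (i : Fin n)
    (S : Finset (Fin m)) :
    ∃ X : Fin n → Finset (Fin m),
      (∀ k l : Fin n, k ≠ l → Disjoint (X k) (X l)) ∧ (∀ k, X k ⊆ S) ∧
      Wminus b i S = ∑ k ∈ Finset.univ.erase i, b k (X k) :=
  (Wminus_set_nonempty b i S).csSup_mem (Wminus_set_finite b i S)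

private lemma le_W {n m : ℕ} (b : Fin n → Finset (Fin m) → ℝ)
    (S : Finset (Fin m)) (X : Fin n → Finset (Fin m))
    (hd : ∀ k l : Fin n, k ≠ l → Disjoint (X k) (X l)) (hs : ∀ k, X k ⊆ S) :
    ∑ k, b k (X k) ≤ W b S :=
  le_csSup (set_aux_finite (fun X => ∑ k, b k (X k)) _ _).bddAbove ⟨X, hd, hs, rfl⟩

/-- smoothness-type deviation inequality: deviating to the half-truthful bid
guarantees utility at least (1/2)·vᵢ(S) minus the marginal welfare of S for the others. -/
theorem stmt19 {n m : ℕ} (B : Set (Finset (Fin m) → ℝ)) (M : Mechanism n m)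
    (hM : AllocDisjoint M B) (hpay : PayNonneg M B) (hDWM : IsDWM M B)
    (i : Fin n) (vi : Finset (Fin m) → ℝ) (hvi : IsValuation vi)
    (hhalf : (fun T => (1 / 2 : ℝ) * vi T) ∈ B)
    (b : Fin n → Finset (Fin m) → ℝ) (hb : ∀ k : Fin n, k ≠ i → b k ∈ B)
    (S : Finset (Fin m)) :
    (1 / 2) * vi S -
        (Wminus (Function.update b i fun T => (1 / 2 : ℝ) * vi T) i Finset.univ -
          Wminus (Function.update b i fun T => (1 / 2 : ℝ) * vi T) i (Finset.univ \ S)) ≤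
      util M vi i (Function.update b i fun T => (1 / 2 : ℝ) * vi T) := by
  set bi : Finset (Fin m) → ℝ := fun T => (1 / 2 : ℝ) * vi T with hbi
  set b' : Fin n → Finset (Fin m) → ℝ := Function.update b i bi with hb'
  have hb'i : b' i = bi := Function.update_self i bi b
  have hbs : InBidSpace B b' := by
    intro k
    by_cases hk : k = i
    · subst hk; rw [hb'i]; exact hhalf
    · rw [hb', Function.update_of_ne hk]; exact hb k hk
  -- mechanism outcome
  set X := M.alloc b' with hX
  have hXd : ∀ k l : Fin n, k ≠ l → Disjoint (X k) (X l) := hM b' hbs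
  -- welfare identity
  have hW : ∑ k, b' k (X k) = W b' Finset.univ := hDWM.1 b' hbs
  have hsplit : b' i (X i) + ∑ k ∈ Finset.univ.erase i, b' k (X k) = ∑ k, b' k (X k) :=
    Finset.add_sum_erase _ (fun k => b' k (X k)) (Finset.mem_univ i)
  have h1 : ∑ k ∈ Finset.univ.erase i, b' k (X k) ≤ Wminus b' i Finset.univ :=
    le_Wminus b' i Finset.univ X hXd (fun _ => Finset.subset_univ _)
  -- lower bound on W via giving S to agent i
  obtain ⟨Y, hYd, hYs, hYval⟩ := Wminus_attained b' i (Finset.univ \ S)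
  have h2 : (1 / 2) * vi S + Wminus b' i (Finset.univ \ S) ≤ W b' Finset.univ := by
    set Z := Function.update Y i S with hZ
    have hZi : Z i = S := Function.update_self i S Y
    have hdisjS : ∀ k, k ≠ i → Disjoint S (Y k) := by
      intro k hk
      rw [Finset.disjoint_left]
      intro a haS haY
      have := hYs k haY
      simp [Finset.mem_sdiff] at this
      exact this haS
    have hZd : ∀ k l : Fin n, k ≠ l → Disjoint (Z k) (Z l) := by
      intro k l hkl
      by_cases hk : k = i
      · subst hk
        rw [hZi, hZ, Function.update_of_ne (Ne.symm hkl)]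
        exact hdisjS l (Ne.symm hkl)
      · by_cases hl : l = i
        · subst hl
          rw [hZi, hZ, Function.update_of_ne hk]
          exact (hdisjS k hk).symm
        · rw [hZ, Function.update_of_ne hk, Function.update_of_ne hl]
          exact hYd k l hkl
    have hsum : ∑ k, b' k (Z k) = (1 / 2) * vi S + ∑ k ∈ Finset.univ.erase i, b' k (Y k) := by
      rw [← Finset.add_sum_erase _ (fun k => b' k (Z k)) (Finset.mem_univ i), hZi, hb'i]
      congr 1
      exact Finset.sum_congr rfl fun k hk =>
        congrArg _ (Function.update_of_ne (Finset.mem_erase.1 hk).1 S Y)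
    have := le_W b' Finset.univ Z hZd (fun _ => Finset.subset_univ _)
    rw [hsum] at this
    rw [hYval]
    exact this
  -- payment bound
  have h3 : M.pay b' i ≤ b' i (X i) := hDWM.2.1 b' hbs i
  have hbiX : b' i (X i) = (1 / 2) * vi (X i) := by rw [hb'i]
  have hni : 0 ≤ vi (X i) := hvi.2.2 _
  show _ ≤ vi (X i) - M.pay b' i
  rw [hbiX] at h3 hsplit
  linarith
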